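/- For every integer d ≥ 2, the total number of partition modules P↑(d) = Σ_{q=2}^{d} p(q) satisfies Σ_{q=2}^{d} p(q) < d^{1/4} · e^{c·√d}, where p(q) denotes the number of partitions of the integer q and c = π·√(2/3). -/

import Mathlib

set_option maxHeartbeats 1600000

open Real Finset

private lemma parts_sum_eq {d q : ℕ} (hq : q ≤ d) (P : Nat.Partition q) :
    ∑ i : Fin d, ((i : ℕ) + 1) * P.parts.count ((i : ℕ) + 1) = q := by
  classical
  have hsub : P.parts.toFinset ⊆ Finset.Icc 1 d := by
    intro a ha
    rw [Multiset.mem_toFinset] at ha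
    refine Finset.mem_Icc.mpr ⟨P.parts_pos ha, le_trans ?_ hq⟩
    calc a ≤ P.parts.sum := Multiset.le_sum_of_mem ha
      _ = q := P.parts_sum
  calc ∑ i : Fin d, ((i : ℕ) + 1) * P.parts.count ((i : ℕ) + 1)
      = ∑ i ∈ Finset.range d, (i + 1) * P.parts.count (i + 1) :=
        Fin.sum_univ_eq_sum_range (fun i => (i + 1) * P.parts.count (i + 1)) d
    _ = ∑ k ∈ Finset.Icc 1 d, P.parts.count k • k := by
        rw [← Finset.Ico_add_one_right_eq_Icc, Finset.sum_Ico_eq_sum_range]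
        simp only [Nat.add_sub_cancel, smul_eq_mul]
        exact Finset.sum_congr rfl fun i _ => by rw [add_comm 1 i, mul_comm]
    _ = q := by
        rw [← Finset.sum_multiset_count_of_subset _ _ hsub]
        exact P.parts_sum

private lemma count_le_of_mem_sigma {d q : ℕ} (hq : q ≤ d) (P : Nat.Partition q) (k : ℕ) :
    P.parts.count k ≤ d := by
  calc P.parts.count k ≤ Multiset.card P.parts := Multiset.count_le_card _ _
    _ = Multiset.card P.parts • 1 := by simp
    _ ≤ P.parts.sum := Multiset.card_nsmul_le_sum fun x hx => P.parts_pos hx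
    _ = q := P.parts_sum
    _ ≤ d := hq

private lemma sum_part_le (d : ℕ) {x : ℝ} (hx0 : 0 ≤ x) (hx1 : x < 1) :
    ∑ q ∈ Finset.range (d + 1), (Fintype.card (Nat.Partition q) : ℝ) * x ^ q
      ≤ ∏ i : Fin d, (1 - x ^ ((i : ℕ) + 1))⁻¹ := by
  classical
  set A : Finset (Σ q : ℕ, Nat.Partition q) :=
    (Finset.range (d + 1)).sigma (fun q => (Finset.univ : Finset (Nat.Partition q))) with hA
  set F : (Σ q : ℕ, Nat.Partition q) → (Fin d → ℕ) :=
    fun p i => p.2.parts.count ((i : ℕ) + 1) with hF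
  have hmem : ∀ p ∈ A, p.1 ≤ d := by
    intro p hp
    rw [hA, Finset.mem_sigma, Finset.mem_range] at hp
    omega
  have key : ∀ p ∈ A, (x : ℝ) ^ p.1 = ∏ i : Fin d, x ^ (((i : ℕ) + 1) * F p i) := by
    intro p hp
    rw [Finset.prod_pow_eq_pow_sum]
    congr 1
    exact (parts_sum_eq (hmem p hp) p.2).symm
  have hinj : ∀ p₁ ∈ A, ∀ p₂ ∈ A, F p₁ = F p₂ → p₁ = p₂ := by
    rintro ⟨q1, P1⟩ h₁ ⟨q2, P2⟩ h₂ hFe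
    have hq1 : q1 ≤ d := hmem _ h₁
    have hq2 : q2 ≤ d := hmem _ h₂
    have hparts : P1.parts = P2.parts := by
      ext k
      rcases Nat.lt_or_ge 0 k with hk0 | hk0
      · rcases Nat.lt_or_ge d k with hkd | hkd
        · -- k > d : both counts zero
          have c₁ : P1.parts.count k = 0 := by
            rw [Multiset.count_eq_zero]
            intro hk
            have : k ≤ q1 := by
              calc k ≤ P1.parts.sum := Multiset.le_sum_of_mem hk
                _ = q1 := P1.parts_sum
            omega
          have c₂ : P2.parts.count k = 0 := by
            rw [Multiset.count_eq_zero]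
            intro hk
            have : k ≤ q2 := by
              calc k ≤ P2.parts.sum := Multiset.le_sum_of_mem hk
                _ = q2 := P2.parts_sum
            omega
          rw [c₁, c₂]
        · -- 1 ≤ k ≤ d
          have hik : k - 1 < d := by omega
          have := congrFun hFe ⟨k - 1, hik⟩
          simp only [hF] at this
          have hk1 : k - 1 + 1 = k := by omega
          rwa [hk1] at this
      · -- k = 0
        interval_cases k
        have c₁ : P1.parts.count 0 = 0 := by
          rw [Multiset.count_eq_zero]
          intro hk
          exact absurd (P1.parts_pos hk) (lt_irrefl 0)
        have c₂ : P2.parts.count 0 = 0 := by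
          rw [Multiset.count_eq_zero]
          intro hk
          exact absurd (P2.parts_pos hk) (lt_irrefl 0)
        rw [c₁, c₂]
    have hq : q1 = q2 := by
      rw [← P1.parts_sum, ← P2.parts_sum, hparts]
    subst hq
    have : P1 = P2 := Nat.Partition.ext hparts
    rw [this]
  calc
    ∑ q ∈ Finset.range (d + 1), (Fintype.card (Nat.Partition q) : ℝ) * x ^ q
        = ∑ p ∈ A, (x : ℝ) ^ p.1 := by
          rw [hA, Finset.sum_sigma]
          refine Finset.sum_congr rfl fun q _ => ?_
          simp [Finset.sum_const, Finset.card_univ, mul_comm]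
    _ = ∑ p ∈ A, ∏ i : Fin d, x ^ (((i : ℕ) + 1) * F p i) := Finset.sum_congr rfl key
    _ = ∑ g ∈ A.image F, ∏ i : Fin d, x ^ (((i : ℕ) + 1) * g i) := by
          rw [Finset.sum_image hinj]
    _ ≤ ∑ g ∈ Fintype.piFinset (fun _ : Fin d => Finset.range (d + 1)),
          ∏ i : Fin d, x ^ (((i : ℕ) + 1) * g i) := by
          refine Finset.sum_le_sum_of_subset_of_nonneg ?_ ?_
          · intro g hg
            rw [Finset.mem_image] at hg
            obtain ⟨p, hp, rfl⟩ := hg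
            rw [Fintype.mem_piFinset]
            intro i
            rw [Finset.mem_range, Nat.lt_succ_iff]
            exact count_le_of_mem_sigma (hmem p hp) p.2 _
          · intro g _ _
            exact Finset.prod_nonneg fun i _ => pow_nonneg hx0 _
    _ = ∏ i : Fin d, ∑ m ∈ Finset.range (d + 1), x ^ (((i : ℕ) + 1) * m) :=
          (Finset.prod_univ_sum (fun _ : Fin d => Finset.range (d + 1))
            (fun i m => x ^ (((i : ℕ) + 1) * m))).symm
    _ ≤ ∏ i : Fin d, (1 - x ^ ((i : ℕ) + 1))⁻¹ := by
          refine Finset.prod_le_prod (fun i _ => ?_) (fun i _ => ?_)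
          · exact Finset.sum_nonneg fun m _ => pow_nonneg hx0 _
          · have hxk : x ^ ((i : ℕ) + 1) < 1 := pow_lt_one₀ hx0 hx1 (Nat.succ_ne_zero _)
            have hxk0 : 0 ≤ x ^ ((i : ℕ) + 1) := pow_nonneg hx0 _
            calc ∑ m ∈ Finset.range (d + 1), x ^ (((i : ℕ) + 1) * m)
                = ∑ m ∈ Finset.range (d + 1), (x ^ ((i : ℕ) + 1)) ^ m := by
                  refine Finset.sum_congr rfl fun m _ => ?_
                  rw [pow_mul]
              _ ≤ (1 - x ^ ((i : ℕ) + 1))⁻¹ :=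
                  sum_le_hasSum _ (fun m _ => pow_nonneg hxk0 _)
                    (hasSum_geometric_of_lt_one hxk0 hxk)

private lemma prod_inv_le (d : ℕ) {x : ℝ} (hx0 : 0 ≤ x) (hx1 : x < 1) :
    ∏ i : Fin d, (1 - x ^ ((i : ℕ) + 1))⁻¹
      ≤ Real.exp (π ^ 2 / 6 * (x / (1 - x))) := by
  have hpos : ∀ i : Fin d, (0 : ℝ) < 1 - x ^ ((i : ℕ) + 1) := by
    intro i
    have : x ^ ((i : ℕ) + 1) < 1 := pow_lt_one₀ hx0 hx1 (Nat.succ_ne_zero _)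
    linarith
  have habs : ∀ i : Fin d, |x ^ ((i : ℕ) + 1)| < 1 := by
    intro i
    rw [abs_of_nonneg (pow_nonneg hx0 _)]
    exact pow_lt_one₀ hx0 hx1 (Nat.succ_ne_zero _)
  -- the summands
  set f : Fin d → ℕ → ℝ := fun i j => (x ^ ((i : ℕ) + 1)) ^ (j + 1) / (j + 1) with hf
  have hHS : ∀ i : Fin d, HasSum (f i) (-Real.log (1 - x ^ ((i : ℕ) + 1))) := fun i =>
    Real.hasSum_pow_div_log_of_abs_lt_one (habs i)
  have heq : ∏ i : Fin d, (1 - x ^ ((i : ℕ) + 1))⁻¹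
      = Real.exp (∑ i : Fin d, -Real.log (1 - x ^ ((i : ℕ) + 1))) := by
    rw [Real.exp_sum]
    refine Finset.prod_congr rfl fun i _ => ?_
    rw [Real.exp_neg, Real.exp_log (hpos i)]
  rw [heq, Real.exp_le_exp]
  -- bound the sum of logs
  have hsw : ∑ i : Fin d, -Real.log (1 - x ^ ((i : ℕ) + 1)) = ∑' j : ℕ, ∑ i : Fin d, f i j := by
    have h : ∑' j : ℕ, ∑ i : Fin d, f i j = ∑ i : Fin d, ∑' j : ℕ, f i j :=
      Summable.tsum_finsetSum (fun i _ => (hHS i).summable)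
    rw [h]
    exact Finset.sum_congr rfl fun i _ => ((hHS i).tsum_eq).symm
  rw [hsw]
  -- Basel
  have hBasel : HasSum (fun j : ℕ => 1 / ((j : ℝ) + 1) ^ 2) (π ^ 2 / 6) := by
    have h0 : HasSum (fun n : ℕ => (1 : ℝ) / (n : ℝ) ^ 2) (π ^ 2 / 6) := hasSum_zeta_two
    have h1 : HasSum (fun n : ℕ => (1 : ℝ) / ((n + 1 : ℕ) : ℝ) ^ 2) (π ^ 2 / 6) := by
      refine (hasSum_nat_add_iff (f := fun n : ℕ => (1 : ℝ) / (n : ℝ) ^ 2) 1).mpr ?_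
      simpa using h0
    have he : (fun j : ℕ => 1 / ((j : ℝ) + 1) ^ 2)
        = (fun n : ℕ => (1 : ℝ) / ((n + 1 : ℕ) : ℝ) ^ 2) := by
      funext j; push_cast; ring
    rw [he]
    exact h1
  have hG : HasSum (fun j : ℕ => x / (1 - x) * (1 / ((j : ℝ) + 1) ^ 2))
      (x / (1 - x) * (π ^ 2 / 6)) := hBasel.mul_left _
  have hx1' : (0 : ℝ) < 1 - x := by linarith
  have hterm : ∀ j : ℕ, ∑ i : Fin d, f i j ≤ x / (1 - x) * (1 / ((j : ℝ) + 1) ^ 2) := by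
    intro j
    set y : ℝ := x ^ (j + 1) with hy
    have hy0 : 0 ≤ y := pow_nonneg hx0 _
    have hy1 : y < 1 := pow_lt_one₀ hx0 hx1 (Nat.succ_ne_zero _)
    have hy1' : (0 : ℝ) < 1 - y := by linarith
    have hstep1 : ∑ i : Fin d, f i j = (∑ i : Fin d, y ^ ((i : ℕ) + 1)) / (j + 1 : ℝ) := by
      rw [Finset.sum_div]
      refine Finset.sum_congr rfl fun i _ => ?_
      simp only [hf, hy]
      rw [← pow_mul, ← pow_mul, mul_comm ((i : ℕ) + 1) (j + 1)]
    have hgeo : ∑ i : Fin d, y ^ ((i : ℕ) + 1) ≤ y / (1 - y) := by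
      calc ∑ i : Fin d, y ^ ((i : ℕ) + 1) = y * ∑ i ∈ Finset.range d, y ^ i := by
            rw [Finset.mul_sum, Fin.sum_univ_eq_sum_range (fun i => y ^ (i + 1)) d]
            refine Finset.sum_congr rfl fun i _ => ?_
            rw [pow_succ, mul_comm]
        _ ≤ y * (1 - y)⁻¹ := by
            refine mul_le_mul_of_nonneg_left ?_ hy0
            exact sum_le_hasSum _ (fun m _ => pow_nonneg hy0 _)
              (hasSum_geometric_of_lt_one hy0 hy1)
        _ = y / (1 - y) := (div_eq_mul_inv _ _).symm
    -- key: y/(1-y) ≤ x/((j+1)(1-x))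
    have hkey : y / (1 - y) ≤ x / (((j : ℝ) + 1) * (1 - x)) := by
      rw [div_le_div_iff₀ hy1' (by positivity)]
      -- y * ((j+1)(1-x)) ≤ x * (1-y)
      have hgs : (1 - x) * ∑ i ∈ Finset.range (j + 1), x ^ i = 1 - x ^ (j + 1) := by
        have := geom_sum_mul x (j + 1)
        nlinarith [this]
      have hlow : ((j : ℝ) + 1) * x ^ j ≤ ∑ i ∈ Finset.range (j + 1), x ^ i := by
        have := Finset.card_nsmul_le_sum (Finset.range (j + 1))
          (fun i => x ^ i) (x ^ j) (fun i hi => by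
            rw [Finset.mem_range, Nat.lt_succ_iff] at hi
            exact pow_le_pow_of_le_one hx0 (le_of_lt hx1) hi)
        rw [Finset.card_range, nsmul_eq_mul] at this
        push_cast at this
        linarith
      have h1y : ((j : ℝ) + 1) * x ^ j * (1 - x) ≤ 1 - y := by
        rw [hy]
        push_cast
        nlinarith [hgs, hlow, hx1'.le]
      have hyx : y = x ^ j * x := by rw [hy, pow_succ]
      have hmul := mul_le_mul_of_nonneg_left h1y hx0
      calc y * (((j : ℝ) + 1) * (1 - x)) = x * (((j : ℝ) + 1) * x ^ j * (1 - x)) := by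
            rw [hyx]; ring
        _ ≤ x * (1 - y) := hmul
    calc ∑ i : Fin d, f i j = (∑ i : Fin d, y ^ ((i : ℕ) + 1)) / (j + 1 : ℝ) := hstep1
      _ ≤ (y / (1 - y)) / (j + 1 : ℝ) :=
          (div_le_div_iff_of_pos_right (by positivity)).mpr hgeo
      _ ≤ (x / (((j : ℝ) + 1) * (1 - x))) / (j + 1 : ℝ) :=
          (div_le_div_iff_of_pos_right (by positivity)).mpr hkey
      _ = x / (1 - x) * (1 / ((j : ℝ) + 1) ^ 2) := by
          rw [div_div, show ((j : ℝ) + 1) * (1 - x) * ((j : ℝ) + 1)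
                = (1 - x) * ((j : ℝ) + 1) ^ 2 by ring,
            ← div_div, div_mul_eq_mul_div, mul_one_div, div_div, mul_comm (1 - x), ← div_div]
  have hsummable : Summable (fun j : ℕ => ∑ i : Fin d, f i j) :=
    summable_sum fun i _ => (hHS i).summable
  calc ∑' j : ℕ, ∑ i : Fin d, f i j
      ≤ ∑' j : ℕ, x / (1 - x) * (1 / ((j : ℝ) + 1) ^ 2) :=
        Summable.tsum_le_tsum hterm hsummable hG.summable
    _ = x / (1 - x) * (π ^ 2 / 6) := hG.tsum_eq
    _ = π ^ 2 / 6 * (x / (1 - x)) := by ring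

/-- For every integer `d ≥ 2`, the total number of partition modules
`P↑(d) = Σ_{q=2}^{d} p(q)` satisfies `Σ_{q=2}^{d} p(q) < d^{1/4} · e^{c·√d}`,
where `p(q)` is the number of partitions of `q` and `c = π·√(2/3)`. -/
theorem sum_partitions_lt (d : ℕ) (hd : 2 ≤ d) :
    ∑ q ∈ Finset.Icc 2 d, (Fintype.card (Nat.Partition q) : ℝ)
      < (d : ℝ) ^ ((1 : ℝ) / 4) *
        Real.exp (Real.pi * Real.sqrt (2 / 3) * Real.sqrt (d : ℝ)) := by
  have hd0 : (0 : ℝ) < d := by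
    have : (2 : ℝ) ≤ d := by exact_mod_cast hd
    linarith
  set s : ℝ := Real.sqrt d with hs_def
  have hs : 0 < s := Real.sqrt_pos.mpr hd0
  have hss : s * s = d := Real.mul_self_sqrt hd0.le
  have h6 : (0 : ℝ) < Real.sqrt 6 := Real.sqrt_pos.mpr (by norm_num)
  have h66 : Real.sqrt 6 * Real.sqrt 6 = 6 := Real.mul_self_sqrt (by norm_num)
  set t : ℝ := π / (Real.sqrt 6 * s) with ht_def
  have ht0 : 0 < t := div_pos Real.pi_pos (by positivity)
  set x : ℝ := Real.exp (-t) with hx_def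
  have hx0 : 0 < x := Real.exp_pos _
  have hx1 : x < 1 := Real.exp_lt_one_iff.mpr (by linarith)
  have hx1' : (0 : ℝ) < 1 - x := by linarith
  -- step 1: pull out exp(t*d)
  have step1 : ∑ q ∈ Finset.Icc 2 d, (Fintype.card (Nat.Partition q) : ℝ)
      ≤ Real.exp (t * d) *
        ∑ q ∈ Finset.range (d + 1), (Fintype.card (Nat.Partition q) : ℝ) * x ^ q := by
    rw [Finset.mul_sum]
    calc ∑ q ∈ Finset.Icc 2 d, (Fintype.card (Nat.Partition q) : ℝ)
        ≤ ∑ q ∈ Finset.Icc 2 d,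
            Real.exp (t * d) * ((Fintype.card (Nat.Partition q) : ℝ) * x ^ q) := by
          refine Finset.sum_le_sum fun q hq => ?_
          rw [Finset.mem_Icc] at hq
          have hxq : x ^ q = Real.exp (-(t * q)) := by
            rw [hx_def, ← Real.exp_nat_mul]
            ring_nf
          have h1 : (1 : ℝ) ≤ Real.exp (t * d) * x ^ q := by
            rw [hxq, ← Real.exp_add]
            have : (0 : ℝ) ≤ t * d + -(t * q) := by
              have : (q : ℝ) ≤ d := by exact_mod_cast hq.2
              nlinarith [ht0.le]
            calc (1 : ℝ) = Real.exp 0 := Real.exp_zero.symm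
              _ ≤ _ := Real.exp_le_exp.mpr this
          have hc : (0 : ℝ) ≤ (Fintype.card (Nat.Partition q) : ℝ) := by positivity
          nlinarith [h1, hc]
      _ ≤ ∑ q ∈ Finset.range (d + 1),
            Real.exp (t * d) * ((Fintype.card (Nat.Partition q) : ℝ) * x ^ q) := by
          refine Finset.sum_le_sum_of_subset_of_nonneg ?_ fun q _ _ => by positivity
          intro q hq
          rw [Finset.mem_Icc] at hq
          rw [Finset.mem_range]
          omega
  have step2 : ∑ q ∈ Finset.range (d + 1), (Fintype.card (Nat.Partition q) : ℝ) * x ^ q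
      ≤ Real.exp (π ^ 2 / 6 * (x / (1 - x))) :=
    (sum_part_le d hx0.le hx1).trans (prod_inv_le d hx0.le hx1)
  -- step 3: x/(1-x) ≤ 1/t
  have hxfrac : x / (1 - x) ≤ 1 / t := by
    have het : t + 1 ≤ Real.exp t := by
      have := Real.add_one_le_exp t
      linarith
    have het0 : (0 : ℝ) < Real.exp t := Real.exp_pos _
    have h1 : x = (Real.exp t)⁻¹ := by rw [hx_def, Real.exp_neg]
    rw [div_le_div_iff₀ hx1' ht0]
    have h2 : x * t * Real.exp t ≤ 1 * (1 - x) * Real.exp t := by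
      rw [h1]
      field_simp
      linarith
    exact le_of_mul_le_mul_right h2 het0
  have step3 : Real.exp (t * d) * Real.exp (π ^ 2 / 6 * (x / (1 - x)))
      ≤ Real.exp (π * Real.sqrt (2 / 3) * s) := by
    rw [← Real.exp_add, Real.exp_le_exp]
    have h1 : π ^ 2 / 6 * (x / (1 - x)) ≤ π ^ 2 / 6 * (1 / t) := by
      have hpi : (0 : ℝ) < π ^ 2 / 6 := by positivity
      nlinarith [hxfrac]
    have h2 : t * d + π ^ 2 / 6 * (1 / t) = π * Real.sqrt (2 / 3) * s := by
      have h23 : Real.sqrt (2 / 3) = Real.sqrt 6 / 3 := by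
        rw [show (2 : ℝ) / 3 = 6 / 9 by norm_num]
        rw [show (6 : ℝ) / 9 = (Real.sqrt 6 / 3) ^ 2 by nlinarith [h66]]
        exact Real.sqrt_sq (by positivity)
      have h60 : Real.sqrt 6 ≠ 0 := ne_of_gt h6
      have hs0 : s ≠ 0 := ne_of_gt hs
      have hpi : π ≠ 0 := ne_of_gt Real.pi_pos
      rw [h23, ht_def, ← hss]
      have h66' : Real.sqrt 6 ^ 2 = 6 := by rw [sq]; exact h66
      field_simp
      ring_nf
      linear_combination (-3) * h66'
    linarith
  have hrpow : (1 : ℝ) < (d : ℝ) ^ ((1 : ℝ) / 4) := by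
    refine (Real.one_lt_rpow_iff_of_pos hd0).mpr (Or.inl ⟨?_, by norm_num⟩)
    have : (2 : ℝ) ≤ d := by exact_mod_cast hd
    linarith
  have hfine : ∑ q ∈ Finset.Icc 2 d, (Fintype.card (Nat.Partition q) : ℝ)
      ≤ Real.exp (π * Real.sqrt (2 / 3) * s) := by
    calc ∑ q ∈ Finset.Icc 2 d, (Fintype.card (Nat.Partition q) : ℝ)
        ≤ Real.exp (t * d) *
          ∑ q ∈ Finset.range (d + 1), (Fintype.card (Nat.Partition q) : ℝ) * x ^ q := step1
      _ ≤ Real.exp (t * d) * Real.exp (π ^ 2 / 6 * (x / (1 - x))) := by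
          exact mul_le_mul_of_nonneg_left step2 (Real.exp_pos _).le
      _ ≤ Real.exp (π * Real.sqrt (2 / 3) * s) := step3
  calc ∑ q ∈ Finset.Icc 2 d, (Fintype.card (Nat.Partition q) : ℝ)
      ≤ Real.exp (π * Real.sqrt (2 / 3) * s) := hfine
    _ < (d : ℝ) ^ ((1 : ℝ) / 4) * Real.exp (π * Real.sqrt (2 / 3) * s) :=
        (lt_mul_iff_one_lt_left (Real.exp_pos _)).mpr hrpow
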